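/- Let (X,d,μ) be a doubling metric measure space with dimension n, let m ≥ 2, and suppose the kernels (p_t)_{t>0} satisfy the m-order Gaussian upper bound (GE_m). Then there exists a constant C > 0 such that for every t > 0, every x ∈ X and every bounded measurable g : X → ℂ: ∫_X |p_t(x,y)| |g(y)|² dμ(y) ≤ C · sup_{x' ∈ X} ⨍_{B(x', t^{1/m})} |g(y)|² dμ(y). -/

import Mathlib

open Metric MeasureTheory ENNReal

private lemma inv_le_aux {a b c : ℝ≥0∞} (ha0 : a ≠ 0) (hat : a ≠ ⊤) (hb0 : b ≠ 0)
    (hbt : b ≠ ⊤) (h : b ≤ c * a) : a⁻¹ ≤ c * b⁻¹ := by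
  calc a⁻¹ = b⁻¹ * b * a⁻¹ := by rw [ENNReal.inv_mul_cancel hb0 hbt, one_mul]
  _ ≤ b⁻¹ * (c * a) * a⁻¹ := by gcongr
  _ = c * b⁻¹ * (a * a⁻¹) := by ring
  _ = c * b⁻¹ := by rw [ENNReal.mul_inv_cancel ha0 hat, mul_one]

private lemma summable_aux (a b : ℝ) (hb : 0 < b) :
    Summable (fun k : ℕ => ((k : ℝ) + 1) ^ a * Real.exp (-b * k)) := by
  set q : ℝ := Real.exp (-b) with hq_def
  have hq0 : 0 < q := Real.exp_pos _
  have hq1 : q < 1 := Real.exp_lt_one_iff.mpr (by linarith)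
  set N : ℕ := ⌈a⌉₊ with hN_def
  have S1 : Summable (fun k : ℕ => (k : ℝ) ^ N * q ^ k) :=
    summable_pow_mul_geometric_of_norm_lt_one N
      (by rw [Real.norm_eq_abs, abs_of_pos hq0]; exact hq1)
  have S2 : Summable (fun k : ℕ => ((k : ℝ) + 1) ^ N * q ^ (k + 1)) := by
    have := (summable_nat_add_iff 1).mpr S1
    refine this.congr fun k => ?_
    push_cast
    ring
  have S3 : Summable (fun k : ℕ => ((k : ℝ) + 1) ^ N * q ^ k) := by
    refine (S2.mul_left q⁻¹).congr fun k => ?_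
    rw [pow_succ]
    field_simp
  refine Summable.of_nonneg_of_le (fun k => by positivity) (fun k => ?_) S3
  have h1 : ((k : ℝ) + 1) ^ a ≤ ((k : ℝ) + 1) ^ (N : ℝ) :=
    Real.rpow_le_rpow_of_exponent_le (by
      have : (0:ℝ) ≤ (k:ℝ) := Nat.cast_nonneg k
      linarith) (Nat.le_ceil a)
  have h2 : Real.exp (-b * k) = q ^ k := by
    rw [hq_def, ← Real.exp_nat_mul]
    ring_nf
  rw [h2]
  have h3 : ((k : ℝ) + 1) ^ (N : ℝ) = ((k : ℝ) + 1) ^ N := Real.rpow_natCast _ N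
  have hqk : (0:ℝ) ≤ q ^ k := by positivity
  calc ((k : ℝ) + 1) ^ a * q ^ k ≤ ((k : ℝ) + 1) ^ (N:ℝ) * q ^ k := by gcongr
  _ = ((k : ℝ) + 1) ^ N * q ^ k := by rw [h3]


private lemma secondCountable_aux {X : Type*} [MetricSpace X] [MeasurableSpace X]
    [OpensMeasurableSpace X] (μ : Measure X) (x0 : X)
    (hball : ∀ (x : X) (r : ℝ), 0 < r → 0 < μ (ball x r) ∧ μ (ball x r) < ⊤) :
    SecondCountableTopology X := by
  apply Metric.secondCountable_of_almost_dense_set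
  intro eps heps
  have key : ∀ k : ℕ, ∃ M : Set X, M.Countable ∧
      ∀ z ∈ ball x0 ((k:ℝ)+1), ∃ y ∈ M, dist z y ≤ eps := by
    intro k
    set S : Set (Set X) := {s | s ⊆ ball x0 ((k:ℝ)+1) ∧
      s.Pairwise fun a b => eps ≤ dist a b} with hS_def
    obtain ⟨M, -, hM⟩ := zorn_subset_nonempty S (by
        intro c hcS hchain _
        refine ⟨⋃₀ c, ⟨Set.sUnion_subset fun s hs => (hcS hs).1, ?_⟩,
          fun s hs => Set.subset_sUnion_of_mem hs⟩
        intro a ha b hb hab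
        obtain ⟨s1, hs1, ha1⟩ := ha
        obtain ⟨s2, hs2, hb2⟩ := hb
        rcases hchain.total hs1 hs2 with hss | hss
        · exact (hcS hs2).2 (hss ha1) hb2 hab
        · exact (hcS hs1).2 ha1 (hss hb2) hab) ∅
      ⟨Set.empty_subset _, Set.pairwise_empty _⟩
    have hMS : M ∈ S := hM.prop
    have hcount : M.Countable := by
      have hdisj : Pairwise (Function.onFun Disjoint fun i : M => ball (i : X) (eps/2)) := by
        intro i j hij
        apply Set.disjoint_left.mpr
        intro w hwi hwj
        have hne : (i : X) ≠ j := Subtype.coe_injective.ne hij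
        have hsep := hMS.2 i.2 j.2 hne
        rw [mem_ball] at hwi hwj
        have h1 := dist_triangle (i : X) w (j : X)
        rw [dist_comm (i : X) w] at h1
        linarith
      have hunion : μ (⋃ i : M, ball (i : X) (eps/2)) ≠ ⊤ := by
        refine (lt_of_le_of_lt (measure_mono ?_)
          (hball x0 ((k:ℝ)+1+eps) (by positivity)).2).ne
        refine Set.iUnion_subset fun i w hw => ?_
        rw [mem_ball] at hw ⊢
        have hi := hMS.1 i.2
        rw [mem_ball] at hi
        calc dist w x0 ≤ dist w (i : X) + dist (i : X) x0 := dist_triangle _ _ _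
        _ < eps/2 + ((k:ℝ)+1) := by linarith
        _ ≤ (k:ℝ)+1+eps := by linarith
      have hcnt := MeasureTheory.Measure.countable_meas_pos_of_disjoint_of_meas_iUnion_ne_top μ
        (fun _ => measurableSet_ball) hdisj hunion
      have hall : {i : M | 0 < μ (ball (i : X) (eps/2))} = Set.univ :=
        Set.eq_univ_of_forall fun i => (hball _ _ (by positivity)).1
      rw [hall] at hcnt
      have : Countable M := Set.countable_univ_iff.mp hcnt
      exact Set.countable_coe_iff.mp this
    refine ⟨M, hcount, ?_⟩
    intro z hz
    by_contra hcon
    push_neg at hcon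
    have hzM : z ∉ M := fun hzm => by
      have := hcon z hzm
      simp at this
      linarith
    have hins : insert z M ∈ S := by
      constructor
      · exact Set.insert_subset hz hMS.1
      · intro a ha b hb hab
        rcases Set.mem_insert_iff.mp ha with rfl | haM
        · rcases Set.mem_insert_iff.mp hb with rfl | hbM
          · exact absurd rfl hab
          · exact le_of_lt (by have := hcon b hbM; linarith [this])
        · rcases Set.mem_insert_iff.mp hb with rfl | hbM
          · have := hcon a haM
            rw [dist_comm]
            linarith
          · exact hMS.2 haM hbM hab
    have := hM.2 hins (Set.subset_insert z M)
    exact hzM (this (Set.mem_insert z M))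
  choose Ms hcnt hdense using key
  refine ⟨⋃ k, Ms k, Set.countable_iUnion hcnt, fun z => ?_⟩
  obtain ⟨k, hk⟩ := exists_nat_gt (dist z x0)
  obtain ⟨y, hy, hdy⟩ := hdense k z (by rw [mem_ball]; linarith)
  exact ⟨y, Set.mem_iUnion.mpr ⟨k, hy⟩, hdy⟩

/-- On a doubling metric measure space of dimension `n`, if the kernels `p_t`
satisfy the `m`-order Gaussian upper bound `(GE_m)`, then there is `C > 0` such that for every
`t > 0`, `x ∈ X` and bounded measurable `g : X → ℂ`,
`∫ |p_t(x,y)| |g(y)|² dμ(y) ≤ C sup_{x'} ⨍_{B(x',t^{1/m})} |g|² dμ`. -/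
theorem gaussian_bound_average_domination
    {X : Type*} [MetricSpace X] [MeasurableSpace X] [BorelSpace X]
    (μ : Measure X)
    (hball : ∀ (x : X) (r : ℝ), 0 < r → 0 < μ (ball x r) ∧ μ (ball x r) < ⊤)
    (Cd n : ℝ) (hCd : 0 < Cd) (hn : 0 < n)
    (hdoub : ∀ (x : X) (r lam : ℝ), 0 < r → 1 ≤ lam →
      μ (ball x (lam * r)) ≤ ENNReal.ofReal (Cd * lam ^ n) * μ (ball x r))
    (m : ℝ) (hm : 2 ≤ m)
    (p : ℝ → X → X → ℝ)
    (hmeas : ∀ t : ℝ, 0 < t → Measurable (Function.uncurry (p t)))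
    (CG cG : ℝ) (hCG : 0 < CG) (hcG : 0 < cG)
    (hGE : ∀ t : ℝ, 0 < t → ∀ x y : X,
      |p t x y| ≤ CG / (μ (ball x (t ^ (1 / m)))).toReal *
        Real.exp (-cG * (dist x y ^ m / t) ^ (1 / (m - 1)))) :
    ∃ C > (0 : ℝ),
      ∀ t : ℝ, 0 < t → ∀ x : X,
        ∀ g : X → ℂ, Measurable g → (∃ Cb : ℝ, ∀ y : X, ‖g y‖ ≤ Cb) →
          (∫⁻ y, ENNReal.ofReal |p t x y| * (‖g y‖₊ : ℝ≥0∞) ^ 2 ∂μ) ≤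
            ENNReal.ofReal C *
              ⨆ x' : X, (μ (ball x' (t ^ (1 / m))))⁻¹ *
                ∫⁻ y in ball x' (t ^ (1 / m)), (‖g y‖₊ : ℝ≥0∞) ^ 2 ∂μ := by
  have hm0 : (0:ℝ) < m := by linarith
  have hm1 : (0:ℝ) < m - 1 := by linarith
  -- the series constant
  set K : ℝ := ∑' k : ℕ, Cd * Real.exp cG * (((k : ℝ) + 1) ^ n * Real.exp (-cG * k)) with hK_def
  have hKsummable : Summable (fun k : ℕ => Cd * Real.exp cG *
      (((k : ℝ) + 1) ^ n * Real.exp (-cG * k))) :=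
    (summable_aux n cG hcG).mul_left _
  have hKpos : 0 < K := by
    refine Summable.tsum_pos hKsummable (fun k => by positivity) 0 ?_
    positivity
  set C : ℝ := CG * (Cd * (2:ℝ) ^ n) * K with hC_def
  have h2n : (0:ℝ) < (2:ℝ) ^ n := Real.rpow_pos_of_pos two_pos n
  refine ⟨C, by positivity, ?_⟩
  intro t ht x g hg _
  set r : ℝ := t ^ (1 / m) with hr_def
  have hr : 0 < r := Real.rpow_pos_of_pos ht _
  have hrm : r ^ m = t := by
    rw [hr_def, ← Real.rpow_mul ht.le, one_div, inv_mul_cancel₀ (ne_of_gt hm0), Real.rpow_one]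
  have hpos : ∀ z : X, μ (ball z r) ≠ 0 := fun z => (hball z r hr).1.ne'
  have hfin : ∀ z : X, μ (ball z r) ≠ ⊤ := fun z => (hball z r hr).2.ne
  -- σ-finiteness
  haveI : SigmaFinite μ := by
    refine ⟨⟨⟨fun k => ball x (k + 1), fun _ => trivial, fun k => (hball x (k+1) (by positivity)).2, ?_⟩⟩⟩
    ext z
    simp only [Set.mem_iUnion, Metric.mem_ball, Set.mem_univ, iff_true]
    obtain ⟨k, hk⟩ := exists_nat_gt (dist z x)
    exact ⟨k, hk.trans (lt_add_one _)⟩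
  haveI : SecondCountableTopology X := secondCountable_aux μ x hball
  -- notation
  set S : ℝ≥0∞ := ⨆ x' : X, (μ (ball x' r))⁻¹ *
      ∫⁻ y in ball x' r, (‖g y‖₊ : ℝ≥0∞) ^ 2 ∂μ with hS_def
  set E : X → ℝ≥0∞ := fun z =>
    ENNReal.ofReal (Real.exp (-cG * ((max (dist x z - r) 0) ^ m / t) ^ (1 / (m - 1)))) with hE_def
  set s' : Set (X × X) := {q : X × X | dist q.1 q.2 < r} with hs'_def
  have hs'open : IsOpen s' := isOpen_lt (continuous_fst.dist continuous_snd) continuous_const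
  have hs'meas : MeasurableSet s' := hs'open.measurableSet
  set c1 : ℝ≥0∞ := ENNReal.ofReal (CG * (Cd * (2:ℝ) ^ n)) with hc1_def
  set F : X → ℝ≥0∞ := fun y => ENNReal.ofReal |p t x y| * (‖g y‖₊ : ℝ≥0∞) ^ 2 with hF_def
  set G : X → ℝ≥0∞ := fun y => (‖g y‖₊ : ℝ≥0∞) ^ 2 with hG_def
  have hGmeas : Measurable G := (measurable_coe_nnreal_ennreal.comp hg.nnnorm).pow_const 2
  set H : X → X → ℝ≥0∞ := fun y z =>
    (F y * (μ (ball y r))⁻¹) * s'.indicator (fun _ => (1:ℝ≥0∞)) (y, z) with hH_def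
  set H' : X → X → ℝ≥0∞ := fun y z =>
    (c1 * (μ (ball x r))⁻¹ * E z * (μ (ball z r))⁻¹) *
      s'.indicator (fun q => G q.1) (y, z) with hH'_def
  -- measurability facts
  have hEmeas : Measurable E := by
    apply ENNReal.continuous_ofReal.measurable.comp
    apply (Real.continuous_exp.comp ?_).measurable
    apply continuous_const.mul
    apply (Real.continuous_rpow_const (by positivity)).comp
    apply Continuous.div_const
    exact (Real.continuous_rpow_const hm0.le).comp
      (((continuous_const.dist continuous_id).sub continuous_const).max continuous_const)
  have hBmeas : Measurable (fun z : X => μ (ball z r)) := by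
    have : ∀ z : X, μ (ball z r) = μ (Prod.mk z ⁻¹' {q : X × X | dist q.2 q.1 < r}) := by
      intro z; rfl
    simp_rw [this]
    exact measurable_measure_prodMk_left
      ((isOpen_lt (continuous_snd.dist continuous_fst) continuous_const).measurableSet)
  -- Step 1: F y = ∫⁻ z, H y z
  have step1 : ∀ y : X, F y = ∫⁻ z, H y z ∂μ := by
    intro y
    have hsec : ∀ z, s'.indicator (fun _ => (1:ℝ≥0∞)) (y, z)
        = (ball y r).indicator (1 : X → ℝ≥0∞) z := by
      intro z
      by_cases h : dist y z < r
      · have h1 : (y, z) ∈ s' := h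
        have h2 : z ∈ ball y r := by rw [mem_ball, dist_comm]; exact h
        rw [Set.indicator_of_mem h1, Set.indicator_of_mem h2]
        rfl
      · have h1 : (y, z) ∉ s' := h
        have h2 : z ∉ ball y r := fun hz => h (by rw [mem_ball] at hz; rwa [dist_comm] at hz)
        rw [Set.indicator_of_notMem h1, Set.indicator_of_notMem h2]
    calc F y = (F y * (μ (ball y r))⁻¹) * μ (ball y r) := by
          rw [mul_assoc, ENNReal.inv_mul_cancel (hpos y) (hfin y), mul_one]
    _ = (F y * (μ (ball y r))⁻¹) * ∫⁻ z, (ball y r).indicator (1 : X → ℝ≥0∞) z ∂μ := by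
          rw [lintegral_indicator_one measurableSet_ball]
    _ = ∫⁻ z, H y z ∂μ := by
          rw [← lintegral_const_mul _ (Measurable.indicator measurable_const measurableSet_ball :
            Measurable ((ball y r).indicator (1 : X → ℝ≥0∞)))]
          apply lintegral_congr
          intro z
          rw [hH_def, ← hsec z]
  -- Step 2: H ≤ H'
  have step2 : ∀ y z : X, H y z ≤ H' y z := by
    intro y z
    by_cases h : (y, z) ∈ s'
    · have hdyz : dist y z < r := h
      rw [hH_def, hH'_def]
      simp only [Set.indicator_of_mem h]
      rw [mul_one]
      -- key bounds
      have b1 : ENNReal.ofReal |p t x y| ≤ ENNReal.ofReal CG * (μ (ball x r))⁻¹ * E z := by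
        have h1 := hGE t ht x y
        have hψ : ((max (dist x z - r) 0) ^ m / t) ^ (1 / (m - 1))
            ≤ (dist x y ^ m / t) ^ (1 / (m - 1)) := by
          have hle : max (dist x z - r) 0 ≤ dist x y := by
            refine max_le ?_ dist_nonneg
            have := dist_triangle x y z
            have h2 : dist y z < r := hdyz
            linarith
          have h2' : (max (dist x z - r) 0) ^ m ≤ dist x y ^ m :=
            Real.rpow_le_rpow (le_max_right _ 0) hle hm0.le
          have h3' : (max (dist x z - r) 0) ^ m / t ≤ dist x y ^ m / t := by gcongr
          exact Real.rpow_le_rpow (by positivity) h3' (by positivity)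
        have hexp : Real.exp (-cG * (dist x y ^ m / t) ^ (1 / (m - 1)))
            ≤ (Real.exp (-cG * ((max (dist x z - r) 0) ^ m / t) ^ (1 / (m - 1)))) := by
          apply Real.exp_le_exp.mpr
          nlinarith [mul_le_mul_of_nonneg_left hψ hcG.le]
        calc ENNReal.ofReal |p t x y|
            ≤ ENNReal.ofReal (CG / (μ (ball x r)).toReal *
              Real.exp (-cG * (dist x y ^ m / t) ^ (1 / (m - 1)))) := ENNReal.ofReal_le_ofReal h1
        _ ≤ ENNReal.ofReal (CG / (μ (ball x r)).toReal *
              Real.exp (-cG * ((max (dist x z - r) 0) ^ m / t) ^ (1 / (m - 1)))) := by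
              apply ENNReal.ofReal_le_ofReal
              have hnn : 0 ≤ CG / (μ (ball x r)).toReal := by positivity
              exact mul_le_mul_of_nonneg_left hexp hnn
        _ = ENNReal.ofReal (CG / (μ (ball x r)).toReal) * E z := by
              rw [ENNReal.ofReal_mul (by positivity)]
        _ = ENNReal.ofReal CG * (μ (ball x r))⁻¹ * E z := by
              rw [ENNReal.ofReal_div_of_pos (ENNReal.toReal_pos (hpos x) (hfin x)),
                ENNReal.ofReal_toReal (hfin x), div_eq_mul_inv]
      have b3 : (μ (ball y r))⁻¹ ≤ ENNReal.ofReal (Cd * (2:ℝ) ^ n) * (μ (ball z r))⁻¹ := by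
        apply inv_le_aux (hpos y) (hfin y) (hpos z) (hfin z)
        have hsub : ball z r ⊆ ball y (2 * r) := by
          intro w hw
          rw [mem_ball] at hw ⊢
          have h2 : dist z y < r := by rwa [dist_comm] at hdyz
          calc dist w y ≤ dist w z + dist z y := dist_triangle w z y
          _ < r + r := by linarith
          _ = 2 * r := by ring
        exact (measure_mono hsub).trans (hdoub y r 2 hr one_le_two)
      calc F y * (μ (ball y r))⁻¹
          = ENNReal.ofReal |p t x y| * (μ (ball y r))⁻¹ * G y := by rw [hF_def]; ring
      _ ≤ (ENNReal.ofReal CG * (μ (ball x r))⁻¹ * E z) *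
            (ENNReal.ofReal (Cd * (2:ℝ) ^ n) * (μ (ball z r))⁻¹) * G y := by gcongr
      _ = c1 * (μ (ball x r))⁻¹ * E z * (μ (ball z r))⁻¹ * G y := by
            rw [hc1_def, ENNReal.ofReal_mul hCG.le]; ring
    · rw [hH_def, hH'_def]
      simp only [Set.indicator_of_notMem h, mul_zero, le_refl]
  -- Step 3: swap
  have hH'meas : Measurable (Function.uncurry H') := by
    apply Measurable.mul
    · exact ((measurable_const.mul (hEmeas.comp measurable_snd)).mul
        ((hBmeas.comp measurable_snd).inv))
    · exact (hGmeas.comp measurable_fst).indicator hs'meas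
  have step3 : ∫⁻ y, ∫⁻ z, H' y z ∂μ ∂μ = ∫⁻ z, ∫⁻ y, H' y z ∂μ ∂μ :=
    lintegral_lintegral_swap hH'meas.aemeasurable
  -- Step 4: inner integral
  have step4 : ∀ z : X, ∫⁻ y, H' y z ∂μ
      = (c1 * (μ (ball x r))⁻¹ * E z * (μ (ball z r))⁻¹) * ∫⁻ y in ball z r, G y ∂μ := by
    intro z
    have hsec : (fun y => s'.indicator (fun q : X × X => G q.1) (y, z))
        = (ball z r).indicator G := by
      funext y
      by_cases h : dist y z < r
      · have h1 : (y, z) ∈ s' := h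
        have h2 : y ∈ ball z r := h
        rw [Set.indicator_of_mem h1, Set.indicator_of_mem h2]
      · have h1 : (y, z) ∉ s' := h
        have h2 : y ∉ ball z r := h
        rw [Set.indicator_of_notMem h1, Set.indicator_of_notMem h2]
    rw [hH'_def]
    simp only []
    rw [lintegral_const_mul _ (by
      simpa [hsec] using (hGmeas.indicator measurableSet_ball : Measurable ((ball z r).indicator G)))]
    congr 1
    rw [show (fun y => s'.indicator (fun q : X × X => G q.1) (y, z)) = (ball z r).indicator G from hsec]
    exact lintegral_indicator measurableSet_ball G
  -- Step B : the Gaussian integral bound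
  have stepB : ∫⁻ z, E z ∂μ ≤ ENNReal.ofReal K * μ (ball x r) := by
    set A : ℕ → Set X := fun k => ball x (((k : ℝ) + 1) * r) \ ball x ((k : ℝ) * r) with hA_def
    have hcover : (Set.univ : Set X) ⊆ ⋃ k, A k := by
      intro z _
      set k : ℕ := ⌊dist z x / r⌋₊ with hk_def
      refine Set.mem_iUnion.mpr ⟨k, ?_, ?_⟩
      · rw [mem_ball]
        have := Nat.lt_floor_add_one (dist z x / r)
        rw [div_lt_iff₀ hr] at this
        exact this
      · rw [mem_ball, not_lt]
        have h0 : 0 ≤ dist z x / r := by positivity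
        have := Nat.floor_le h0
        rw [le_div_iff₀ hr] at this
        linarith
    have hAk : ∀ k : ℕ, ∫⁻ z in A k, E z ∂μ ≤
        ENNReal.ofReal (Real.exp cG * Real.exp (-cG * k)) *
          (ENNReal.ofReal (Cd * ((k : ℝ) + 1) ^ n) * μ (ball x r)) := by
      intro k
      have hAmeas : MeasurableSet (A k) := measurableSet_ball.diff measurableSet_ball
      have hptwise : ∀ z ∈ A k, E z ≤ ENNReal.ofReal (Real.exp cG * Real.exp (-cG * k)) := by
        intro z hz
        rw [hE_def]
        apply ENNReal.ofReal_le_ofReal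
        rw [← Real.exp_add]
        apply Real.exp_le_exp.mpr
        set ψ : ℝ := ((max (dist x z - r) 0) ^ m / t) ^ (1 / (m - 1)) with hψ_def
        have hψ0 : 0 ≤ ψ := by positivity
        by_cases hk1 : (k : ℝ) ≤ 1
        · nlinarith [mul_nonneg hcG.le hψ0, mul_nonneg hcG.le (sub_nonneg.mpr hk1),
            (Nat.cast_nonneg k : (0:ℝ) ≤ (k:ℝ))]
        · have hk2 : (1:ℝ) ≤ (k : ℝ) - 1 := by
            have h1 : 1 < (k:ℝ) := not_le.mp hk1
            have h2 : 1 < k := by exact_mod_cast h1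
            have h4 : (2:ℝ) ≤ (k:ℝ) := by exact_mod_cast h2
            linarith
          have hd : (k : ℝ) * r ≤ dist x z := by
            have := hz.2
            rw [mem_ball, not_lt] at this
            rwa [dist_comm]
          have h1 : ((k : ℝ) - 1) * r ≤ max (dist x z - r) 0 := by
            refine le_max_of_le_left ?_
            nlinarith
          have hb0 : (0:ℝ) ≤ ((k : ℝ) - 1) * r := by positivity
          have h2 : (((k : ℝ) - 1) * r) ^ m ≤ (max (dist x z - r) 0) ^ m :=
            Real.rpow_le_rpow hb0 h1 hm0.le
          have h3 : (((k : ℝ) - 1) * r) ^ m = ((k : ℝ) - 1) ^ m * t := by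
            rw [Real.mul_rpow (by linarith) hr.le, hrm]
          have h4 : ((k : ℝ) - 1) ^ m ≤ (max (dist x z - r) 0) ^ m / t := by
            rw [le_div_iff₀ ht, ← h3]; exact h2
          have h5 : (((k : ℝ) - 1) ^ m) ^ (1 / (m - 1)) ≤ ψ :=
            Real.rpow_le_rpow (by positivity) h4 (by positivity)
          have h6 : (((k : ℝ) - 1) ^ m) ^ (1 / (m - 1)) = ((k : ℝ) - 1) ^ (m * (1 / (m - 1))) :=
            (Real.rpow_mul (by linarith) _ _).symm
          have h7 : (1:ℝ) ≤ m * (1 / (m - 1)) := by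
            rw [mul_one_div, le_div_iff₀ hm1]
            linarith
          have h8 : (k : ℝ) - 1 ≤ ((k : ℝ) - 1) ^ (m * (1 / (m - 1))) := by
            nth_rewrite 1 [show (k:ℝ) - 1 = ((k:ℝ) - 1) ^ (1:ℝ) from (Real.rpow_one _).symm]
            exact Real.rpow_le_rpow_of_exponent_le hk2 h7
          have : (k : ℝ) - 1 ≤ ψ := by
            calc (k : ℝ) - 1 ≤ ((k : ℝ) - 1) ^ (m * (1 / (m - 1))) := h8
            _ = (((k : ℝ) - 1) ^ m) ^ (1 / (m - 1)) := h6.symm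
            _ ≤ ψ := h5
          nlinarith [mul_le_mul_of_nonneg_left this hcG.le]
      calc ∫⁻ z in A k, E z ∂μ
          ≤ ∫⁻ _ in A k, ENNReal.ofReal (Real.exp cG * Real.exp (-cG * k)) ∂μ :=
            setLIntegral_mono' hAmeas hptwise
      _ = ENNReal.ofReal (Real.exp cG * Real.exp (-cG * k)) * μ (A k) :=
            setLIntegral_const _ _
      _ ≤ ENNReal.ofReal (Real.exp cG * Real.exp (-cG * k)) *
            (ENNReal.ofReal (Cd * ((k : ℝ) + 1) ^ n) * μ (ball x r)) := by
            gcongr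
            calc μ (A k) ≤ μ (ball x (((k : ℝ) + 1) * r)) := measure_mono Set.diff_subset
            _ ≤ ENNReal.ofReal (Cd * ((k : ℝ) + 1) ^ n) * μ (ball x r) :=
                hdoub x r ((k : ℝ) + 1) hr (by
                  have : (0:ℝ) ≤ (k : ℝ) := Nat.cast_nonneg k
                  linarith)
    calc ∫⁻ z, E z ∂μ = ∫⁻ z in Set.univ, E z ∂μ := (setLIntegral_univ _).symm
    _ ≤ ∫⁻ z in ⋃ k, A k, E z ∂μ := lintegral_mono_set hcover
    _ ≤ ∑' k, ∫⁻ z in A k, E z ∂μ := lintegral_iUnion_le _ _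
    _ ≤ ∑' k : ℕ, ENNReal.ofReal (Real.exp cG * Real.exp (-cG * k)) *
          (ENNReal.ofReal (Cd * ((k : ℝ) + 1) ^ n) * μ (ball x r)) := ENNReal.tsum_le_tsum hAk
    _ = ∑' k : ℕ, ENNReal.ofReal (Cd * Real.exp cG * (((k : ℝ) + 1) ^ n * Real.exp (-cG * k)))
          * μ (ball x r) := by
          congr 1
          funext k
          rw [← mul_assoc, ← ENNReal.ofReal_mul (by positivity)]
          congr 2
          ring
    _ = (∑' k : ℕ, ENNReal.ofReal (Cd * Real.exp cG *
          (((k : ℝ) + 1) ^ n * Real.exp (-cG * k)))) * μ (ball x r) := ENNReal.tsum_mul_right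
    _ = ENNReal.ofReal K * μ (ball x r) := by
          rw [hK_def, ENNReal.ofReal_tsum_of_nonneg (fun k => by positivity) hKsummable]
  -- Assemble everything
  calc ∫⁻ y, ENNReal.ofReal |p t x y| * (‖g y‖₊ : ℝ≥0∞) ^ 2 ∂μ
      = ∫⁻ y, F y ∂μ := by rw [hF_def]
  _ = ∫⁻ y, ∫⁻ z, H y z ∂μ ∂μ := lintegral_congr step1
  _ ≤ ∫⁻ y, ∫⁻ z, H' y z ∂μ ∂μ := lintegral_mono fun y => lintegral_mono fun z => step2 y z
  _ = ∫⁻ z, ∫⁻ y, H' y z ∂μ ∂μ := step3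
  _ = ∫⁻ z, (c1 * (μ (ball x r))⁻¹ * E z * (μ (ball z r))⁻¹) * ∫⁻ y in ball z r, G y ∂μ ∂μ :=
      lintegral_congr step4
  _ ≤ ∫⁻ z, (c1 * (μ (ball x r))⁻¹ * S) * E z ∂μ := by
      apply lintegral_mono
      intro z
      have hz : (μ (ball z r))⁻¹ * ∫⁻ y in ball z r, G y ∂μ ≤ S := by
        rw [hS_def]
        exact le_iSup (fun x' : X => (μ (ball x' r))⁻¹ * ∫⁻ y in ball x' r, G y ∂μ) z
      calc (c1 * (μ (ball x r))⁻¹ * E z * (μ (ball z r))⁻¹) * ∫⁻ y in ball z r, G y ∂μ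
          = (c1 * (μ (ball x r))⁻¹ * E z) * ((μ (ball z r))⁻¹ * ∫⁻ y in ball z r, G y ∂μ) := by
            ring
      _ ≤ (c1 * (μ (ball x r))⁻¹ * E z) * S := by gcongr
      _ = (c1 * (μ (ball x r))⁻¹ * S) * E z := by ring
  _ = (c1 * (μ (ball x r))⁻¹ * S) * ∫⁻ z, E z ∂μ := lintegral_const_mul _ hEmeas
  _ ≤ (c1 * (μ (ball x r))⁻¹ * S) * (ENNReal.ofReal K * μ (ball x r)) := by gcongr
  _ = (c1 * ENNReal.ofReal K) * S * ((μ (ball x r))⁻¹ * μ (ball x r)) := by ring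
  _ = (c1 * ENNReal.ofReal K) * S := by
      rw [ENNReal.inv_mul_cancel (hpos x) (hfin x), mul_one]
  _ = ENNReal.ofReal C * S := by
      rw [hc1_def, hC_def, ← ENNReal.ofReal_mul (by positivity)]
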